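/- Let Q be the (m+2n) × (m+2n) real matrix Q = diag(−I_m, J). If S = [[A, B], [C, D]] is a real (m+2n) × (m+2n) block matrix (A of size m×m, B of size m×2n, C of size 2n×m, D of size 2n×2n) satisfying Sᵀ Q S = Q, then B = 0, C = 0, Aᵀ A = I_m and Dᵀ J D = J; that is, A is an orthogonal matrix and D is a symplectic matrix. -/

import Mathlib

set_option synthInstance.maxHeartbeats 1000000
set_option maxHeartbeats 1000000

open Matrix
noncomputable section

/-- The 2n × 2n block-diagonal matrix with n diagonal blocks [[0, 1/2], [−1/2, 0]]. -/
def Jmat (n : ℕ) : Matrix (Fin (2*n)) (Fin (2*n)) ℝ := fun i j =>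
  if j.1 = i.1 + 1 ∧ i.1 % 2 = 0 then 1/2
  else if i.1 = j.1 + 1 ∧ j.1 % 2 = 0 then -1/2
  else 0

/-- The matrix Q = diag(−I_m, J). -/
def Qmat (m n : ℕ) : Matrix (Fin m ⊕ Fin (2*n)) (Fin m ⊕ Fin (2*n)) ℝ :=
  Matrix.fromBlocks (-1) 0 0 (Jmat n)

lemma Jmat_transpose (n : ℕ) : (Jmat n)ᵀ = -(Jmat n) := by
  ext i j
  simp only [Jmat, transpose_apply, Matrix.neg_apply]
  split_ifs with h1 h2 h3 h4 h5 <;> first | (exfalso; omega) | norm_num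

lemma Jmat_mul_self (n : ℕ) : Jmat n * Jmat n = (-(1/4) : ℝ) • 1 := by
  ext i j
  have hi := i.isLt
  have hj := j.isLt
  rw [mul_apply]
  by_cases h : i.1 % 2 = 0
  · have hlt : i.1 + 1 < 2 * n := by omega
    rw [Finset.sum_eq_single ⟨i.1 + 1, hlt⟩]
    · have e1 : Jmat n i ⟨i.1 + 1, hlt⟩ = 1/2 := by
        unfold Jmat; rw [if_pos ⟨rfl, h⟩]
      rw [e1]
      by_cases hji : j = i
      · subst hji
        have e2 : Jmat n ⟨j.1 + 1, hlt⟩ j = -1/2 := by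
          unfold Jmat; rw [if_neg (by (try simp only [Fin.val_mk]); omega), if_pos ⟨rfl, h⟩]
        rw [e2]; simp [one_apply]; norm_num
      · have hji' : j.1 ≠ i.1 := fun hh => hji (Fin.ext hh)
        have e2 : Jmat n ⟨i.1 + 1, hlt⟩ j = 0 := by
          unfold Jmat; rw [if_neg (by (try simp only [Fin.val_mk]); omega), if_neg (by (try simp only [Fin.val_mk]); omega)]
        rw [e2]; simp [one_apply, Ne.symm hji]
    · intro b _ hb
      have hb' : b.1 ≠ i.1 + 1 := fun hh => hb (Fin.ext hh)
      have e : Jmat n i b = 0 := by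
        unfold Jmat; rw [if_neg (by (try simp only [Fin.val_mk]); omega), if_neg (by (try simp only [Fin.val_mk]); omega)]
      rw [e, zero_mul]
    · intro hmem; exact absurd (Finset.mem_univ _) hmem
  · have hlt : i.1 - 1 < 2 * n := by omega
    have hge : 1 ≤ i.1 := by omega
    rw [Finset.sum_eq_single ⟨i.1 - 1, hlt⟩]
    · have e1 : Jmat n i ⟨i.1 - 1, hlt⟩ = -1/2 := by
        unfold Jmat; rw [if_neg (by (try simp only [Fin.val_mk]); omega), if_pos ⟨by (try simp only [Fin.val_mk]); omega, by (try simp only [Fin.val_mk]); omega⟩]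
      rw [e1]
      by_cases hji : j = i
      · subst hji
        have e2 : Jmat n ⟨j.1 - 1, hlt⟩ j = 1/2 := by
          unfold Jmat; rw [if_pos ⟨by (try simp only [Fin.val_mk]); omega, by (try simp only [Fin.val_mk]); omega⟩]
        rw [e2]; simp [one_apply]; norm_num
      · have hji' : j.1 ≠ i.1 := fun hh => hji (Fin.ext hh)
        have e2 : Jmat n ⟨i.1 - 1, hlt⟩ j = 0 := by
          unfold Jmat; rw [if_neg (by (try simp only [Fin.val_mk]); omega), if_neg (by (try simp only [Fin.val_mk]); omega)]
        rw [e2]; simp [one_apply, Ne.symm hji]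
    · intro b _ hb
      have hb' : b.1 ≠ i.1 - 1 := fun hh => hb (Fin.ext hh)
      have e : Jmat n i b = 0 := by
        unfold Jmat; rw [if_neg (by (try simp only [Fin.val_mk]); omega), if_neg (by (try simp only [Fin.val_mk]); omega)]
      rw [e, zero_mul]
    · intro hmem; exact absurd (Finset.mem_univ _) hmem

lemma Jmat_isUnit_det (n : ℕ) : IsUnit (Jmat n).det := by
  have h : Jmat n * ((-4 : ℝ) • Jmat n) = 1 := by
    rw [Matrix.mul_smul, Jmat_mul_self, smul_smul]
    norm_num
  exact Matrix.isUnit_det_of_right_inverse h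

/-- if S = [[A,B],[C,D]] satisfies Sᵀ Q S = Q, then B = 0, C = 0,
Aᵀ A = I_m (A is orthogonal) and Dᵀ J D = J (D is symplectic). -/
theorem block_matrix_preserving_Q (m n : ℕ) (hm : 1 ≤ m) (hn : 1 ≤ n)
    (A : Matrix (Fin m) (Fin m) ℝ) (B : Matrix (Fin m) (Fin (2*n)) ℝ)
    (C : Matrix (Fin (2*n)) (Fin m) ℝ) (D : Matrix (Fin (2*n)) (Fin (2*n)) ℝ)
    (hS : (Matrix.fromBlocks A B C D)ᵀ * Qmat m n * Matrix.fromBlocks A B C D = Qmat m n) :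
    B = 0 ∧ C = 0 ∧ Aᵀ * A = 1 ∧ Dᵀ * Jmat n * D = Jmat n := by
  set J := Jmat n with hJ
  -- transposed equation
  have hS' : (Matrix.fromBlocks A B C D)ᵀ * (Qmat m n)ᵀ * Matrix.fromBlocks A B C D
      = (Qmat m n)ᵀ := by
    have h := congrArg Matrix.transpose hS
    simpa only [Matrix.transpose_mul, Matrix.transpose_transpose, Matrix.mul_assoc] using h
  have hQt : (Qmat m n)ᵀ = Matrix.fromBlocks (-1) 0 0 (-J) := by
    simp [Qmat, Matrix.fromBlocks_transpose, Jmat_transpose n, ← hJ]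
    exact Jmat_transpose n
  rw [hQt] at hS'
  rw [show Qmat m n = Matrix.fromBlocks (-1) 0 0 J from rfl] at hS
  simp only [Matrix.fromBlocks_transpose, Matrix.fromBlocks_multiply,
    Matrix.mul_zero, Matrix.zero_mul, Matrix.mul_one, Matrix.mul_neg, Matrix.neg_mul,
    Matrix.mul_one, add_zero, zero_add, Matrix.fromBlocks_inj] at hS hS'
  obtain ⟨e1, e2, e3, e4⟩ := hS
  obtain ⟨f1, f2, f3, f4⟩ := hS'
  have hCJD : Cᵀ * J * D = 0 := by
    have h : Cᵀ * J * D + Cᵀ * J * D = 0 := by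
      calc Cᵀ * J * D + Cᵀ * J * D
          = (-(Aᵀ * B) + Cᵀ * J * D) - (-(Aᵀ * B) + -(Cᵀ * J * D)) := by abel
        _ = 0 := by rw [e2, f2]; abel
    have h2 : (2:ℝ) • (Cᵀ * J * D) = (2:ℝ) • (0 : Matrix (Fin m) (Fin (2*n)) ℝ) := by
      rw [two_smul]; simpa using h
    simpa using smul_right_injective _ (by norm_num : (2:ℝ) ≠ 0) h2
  have hBB : Bᵀ * B = 0 := by
    have h : Bᵀ * B + Bᵀ * B = 0 := by
      calc Bᵀ * B + Bᵀ * B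
          = -((-(Bᵀ * B) + Dᵀ * J * D) + (-(Bᵀ * B) + -(Dᵀ * J * D))) := by abel
        _ = 0 := by rw [e4, f4]; abel
    have h2 : (2:ℝ) • (Bᵀ * B) = (2:ℝ) • (0 : Matrix (Fin (2*n)) (Fin (2*n)) ℝ) := by
      rw [two_smul]; simpa using h
    exact smul_right_injective _ (by norm_num : (2:ℝ) ≠ 0) h2
  have hB : B = 0 := by
    have hH : Bᴴ * B = 0 := by
      have : Bᴴ = Bᵀ := by ext i j; simp [conjTranspose_apply]
      rw [this, hBB]
    exact Matrix.conjTranspose_mul_self_eq_zero.mp hH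
  have hAA : Aᵀ * A = 1 := by
    have h : Aᵀ * A + Aᵀ * A = 1 + 1 := by
      calc Aᵀ * A + Aᵀ * A
          = -((-(Aᵀ * A) + Cᵀ * J * C) + (-(Aᵀ * A) + -(Cᵀ * J * C))) := by abel
        _ = 1 + 1 := by rw [e1, f1]; abel
    have h2 : (2:ℝ) • (Aᵀ * A) = (2:ℝ) • (1 : Matrix (Fin m) (Fin m) ℝ) := by
      rw [two_smul, two_smul]; exact h
    exact smul_right_injective _ (by norm_num : (2:ℝ) ≠ 0) h2
  have hDJD : Dᵀ * J * D = J := by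
    have h : Dᵀ * J * D + Dᵀ * J * D = J + J := by
      calc Dᵀ * J * D + Dᵀ * J * D
          = (-(Bᵀ * B) + Dᵀ * J * D) - (-(Bᵀ * B) + -(Dᵀ * J * D)) := by abel
        _ = J + J := by rw [e4, f4]; abel
    have h2 : (2:ℝ) • (Dᵀ * J * D) = (2:ℝ) • J := by
      rw [two_smul, two_smul]; exact h
    exact smul_right_injective _ (by norm_num : (2:ℝ) ≠ 0) h2
  have hJdet : IsUnit J.det := Jmat_isUnit_det n
  have hJ0 : J.det ≠ 0 := hJdet.ne_zero
  have hDdet : IsUnit D.det := by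
    have h := congrArg Matrix.det hDJD
    rw [Matrix.det_mul, Matrix.det_mul, Matrix.det_transpose] at h
    have h' : (D.det * D.det) * J.det = 1 * J.det := by linear_combination h
    exact IsUnit.of_mul_eq_one _ (mul_right_cancel₀ hJ0 h')
  have hC : C = 0 := by
    have h1 : Cᵀ * J * D * D⁻¹ = 0 := by rw [hCJD, Matrix.zero_mul]
    rw [Matrix.mul_assoc _ D D⁻¹, Matrix.mul_nonsing_inv D hDdet, Matrix.mul_one] at h1
    have h2 : Cᵀ * J * J⁻¹ = 0 := by rw [h1, Matrix.zero_mul]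
    rw [Matrix.mul_assoc _ J J⁻¹, Matrix.mul_nonsing_inv J hJdet, Matrix.mul_one] at h2
    have h3 := congrArg Matrix.transpose h2
    simpa using h3
  exact ⟨hB, hC, hAA, hDJD⟩


end
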